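/- Let p, q be nonzero coprime integers and let δ = gcd(A(p,q), B(p,q)) > 0. Then 7 divides δ if and only if 7 divides p, and 59 divides δ if and only if 59 divides q. -/

import Mathlib

def A (p q : ℤ) : ℤ := 59*p^2 - 236*p*q - 7*q^2
def B (p q : ℤ) : ℤ := -118*p^2 - 14*p*q + 14*q^2

lemma seven_dvd_B_iff (x y : ℤ) : (7:ℤ) ∣ B x y ↔ (7:ℤ) ∣ x := by
  have hp7 : Prime (7:ℤ) := by norm_num
  constructor
  · intro h
    have h2 : (7:ℤ) ∣ 118 * x^2 := by
      have heq : 118 * x^2 = -(B x y) + (-14*x*y + 14*y^2) := by unfold B; ring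
      rw [heq]
      exact dvd_add (dvd_neg.mpr h) ⟨-2*x*y + 2*y^2, by ring⟩
    have h3 : (7:ℤ) ∣ x^2 := by
      rcases hp7.dvd_mul.mp h2 with h | h
      · omega
      · exact h
    exact hp7.dvd_of_dvd_pow h3
  · rintro ⟨k, rfl⟩
    exact ⟨-118*7*k^2 - 14*k*y + 2*y^2, by unfold B; ring⟩

lemma fiftynine_dvd_A_iff (x y : ℤ) : (59:ℤ) ∣ A x y ↔ (59:ℤ) ∣ y := by
  have hp59 : Prime (59:ℤ) := by norm_num
  constructor
  · intro h
    have h2 : (59:ℤ) ∣ 7 * y^2 := by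
      have heq : 7 * y^2 = -(A x y) + (59*x^2 - 236*x*y) := by unfold A; ring
      rw [heq]
      exact dvd_add (dvd_neg.mpr h) ⟨x^2 - 4*x*y, by ring⟩
    have h3 : (59:ℤ) ∣ y^2 := by
      rcases hp59.dvd_mul.mp h2 with h | h
      · omega
      · exact h
    exact hp59.dvd_of_dvd_pow h3
  · rintro ⟨k, rfl⟩
    exact ⟨x^2 - 236*x*k - 7*59*k^2, by unfold A; ring⟩

theorem stmt13 (p q : ℤ) (hp : p ≠ 0) (hq : q ≠ 0) (hcop : Int.gcd p q = 1) :
    ((7 : ℤ) ∣ (Int.gcd (A p q) (B p q) : ℤ) ↔ (7 : ℤ) ∣ p) ∧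
    ((59 : ℤ) ∣ (Int.gcd (A p q) (B p q) : ℤ) ↔ (59 : ℤ) ∣ q) := by
  constructor
  · constructor
    · intro h
      exact (seven_dvd_B_iff p q).mp (h.trans (Int.gcd_dvd_right _ _))
    · intro h
      refine Int.dvd_coe_gcd ?_ ((seven_dvd_B_iff p q).mpr h)
      obtain ⟨k, rfl⟩ := h
      exact ⟨59*7*k^2 - 236*k*q - q^2, by unfold A; ring⟩
  · constructor
    · intro h
      exact (fiftynine_dvd_A_iff p q).mp (h.trans (Int.gcd_dvd_left _ _))
    · intro h
      refine Int.dvd_coe_gcd ((fiftynine_dvd_A_iff p q).mpr h) ?_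
      obtain ⟨k, rfl⟩ := h
      exact ⟨-2*p^2 - 14*p*k + 14*59*k^2, by unfold B; ring⟩
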